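/- Let the weights μ_1, ..., μ_n ≥ 0 be pairwise distinct and monotone in the degrees d (so that μ_1 > μ_2 > ... > μ_q), and let X be an optimal symmetric solution of ROCP. If x_{i,k−1} > 0 and x_{jk} > 0 for some internal indices i, j ∈ {1, ..., q} and some position k ≤ ⌈q/2⌉, then i ≤ j. -/

import Mathlib

open Matrix Finset

/-- The ROCP objective `f(X) = (1/2) ∑_{i,j} ∑_{k,l} μ_i x_{ik} μ_j x_{jl} |k - l|`. -/
noncomputable def fROCP {n q : ℕ} (μ : Fin n → ℝ) (X : Matrix (Fin n) (Fin q) ℝ) : ℝ :=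
  (1 / 2) * ∑ i, ∑ j, ∑ k, ∑ l,
    μ i * X i k * (μ j * X j l) * |((k : ℕ) : ℝ) - ((l : ℕ) : ℝ)|

/-- The feasible set of the relaxed optimal caterpillar problem (ROCP): box constraints,
unique assignment of each vertex, one internal vertex per backbone position, and balance
of vertex degrees (positions `k = 1, ..., q` are represented by `Fin q`, vertex indices
`i = 1, ..., n` by `Fin n`, internal indices being those with `(i : ℕ) < q`). -/
def ROCPFeasible (n q : ℕ) (d : Fin n → ℕ) (X : Matrix (Fin n) (Fin q) ℝ) : Prop :=
  (∀ i k, 0 ≤ X i k ∧ X i k ≤ 1) ∧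
  (∀ i, ∑ k, X i k = 1) ∧
  (∀ k, (∑ i : Fin n, if (i : ℕ) < q then X i k else 0) = 1) ∧
  (∀ k : Fin q, (k : ℕ) ≠ 0 → (k : ℕ) ≠ q - 1 → ∑ i, ((d i : ℝ) - 2) * X i k = 0) ∧
  (∀ k : Fin q, ((k : ℕ) = 0 ∨ (k : ℕ) = q - 1) → ∑ i, ((d i : ℝ) - 2) * X i k = -1)

/-- A matrix is a symmetric solution if `x_{ik} = x_{i, q-k+1}` for all `i`, `k`. -/
def SymmetricSol {n q : ℕ} (X : Matrix (Fin n) (Fin q) ℝ) : Prop :=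
  ∀ i k, X i k = X i k.rev

lemma pair_le_sum {α : Type*} [Fintype α] [DecidableEq α] (f : α → ℝ) (a b : α)
    (hab : a ≠ b) (h0 : ∀ i, 0 ≤ f i) : f a + f b ≤ ∑ i, f i := by
  have hsub : {a, b} ⊆ (univ : Finset α) := subset_univ _
  have := Finset.sum_le_sum_of_subset_of_nonneg hsub (fun x _ _ => h0 x)
  rwa [Finset.sum_pair hab] at this

lemma sum_ite2 {α : Type*} [Fintype α] [DecidableEq α] {a b : α} (hab : a ≠ b)
    (c1 c2 : ℝ) (h : α → ℝ) :
    ∑ x, (if x = a then c1 else if x = b then c2 else 0) * h x = c1 * h a + c2 * h b := by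
  have e : ∀ x, (if x = a then c1 else if x = b then c2 else 0) * h x
      = (if x = a then c1 * h a else 0) + (if x = b then c2 * h b else 0) := by
    intro x
    by_cases h1 : x = a
    · subst h1; rw [if_pos rfl, if_pos rfl, if_neg hab, add_zero]
    · rw [if_neg h1, if_neg h1, zero_add]
      by_cases h2 : x = b
      · subst h2; rw [if_pos rfl, if_pos rfl]
      · rw [if_neg h2, if_neg h2, zero_mul]
  rw [Finset.sum_congr rfl fun x _ => e x, Finset.sum_add_distrib]
  simp [Finset.sum_ite_eq']

lemma sum_ite3 {α : Type*} [Fintype α] [DecidableEq α] {a b c : α} (hab : a ≠ b)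
    (hac : a ≠ c) (hbc : b ≠ c) (c1 c2 c3 : ℝ) (h : α → ℝ) :
    ∑ x, (if x = a then c1 else if x = b then c2 else if x = c then c3 else 0) * h x
      = c1 * h a + c2 * h b + c3 * h c := by
  have e : ∀ x, (if x = a then c1 else if x = b then c2 else if x = c then c3 else 0) * h x
      = (if x = a then c1 * h a else 0) + (if x = b then c2 * h b else 0)
        + (if x = c then c3 * h c else 0) := by
    intro x
    by_cases h1 : x = a
    · subst h1; rw [if_pos rfl, if_pos rfl, if_neg hab, if_neg hac, add_zero, add_zero]
    · rw [if_neg h1, if_neg h1, zero_add]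
      by_cases h2 : x = b
      · subst h2; rw [if_pos rfl, if_pos rfl, if_neg hbc, add_zero]
      · rw [if_neg h2, if_neg h2, zero_add]
        by_cases h3 : x = c
        · subst h3; rw [if_pos rfl, if_pos rfl]
        · rw [if_neg h3, if_neg h3, zero_mul]
  rw [Finset.sum_congr rfl fun x _ => e x]
  rw [Finset.sum_add_distrib, Finset.sum_add_distrib]
  simp [Finset.sum_ite_eq']

lemma quad_expand {q : ℕ} (w dl : Fin q → ℝ) (t : ℝ) (A : Fin q → Fin q → ℝ)
    (hA : ∀ k l, A k l = A l k) :
    (1/2) * ∑ k, ∑ l, (w k + t * dl k) * (w l + t * dl l) * A k l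
    = (1/2) * (∑ k, ∑ l, w k * w l * A k l) + t * (∑ k, ∑ l, w k * dl l * A k l)
      + (1/2) * t^2 * (∑ k, ∑ l, dl k * dl l * A k l) := by
  have key : ∀ k l : Fin q, (w k + t * dl k) * (w l + t * dl l) * A k l
      = w k * w l * A k l + t * (w k * dl l * A k l) + t * (dl k * w l * A k l)
        + t^2 * (dl k * dl l * A k l) := fun k l => by ring
  have swap : (∑ k, ∑ l, dl k * w l * A k l) = ∑ k, ∑ l, w k * dl l * A k l := by
    rw [Finset.sum_comm]
    exact Finset.sum_congr rfl fun k _ => Finset.sum_congr rfl fun l _ => by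
      rw [hA l k]; ring
  calc (1/2) * ∑ k, ∑ l, (w k + t * dl k) * (w l + t * dl l) * A k l
      = (1/2) * ∑ k, ∑ l, (w k * w l * A k l + t * (w k * dl l * A k l)
          + t * (dl k * w l * A k l) + t^2 * (dl k * dl l * A k l)) := by
        rw [Finset.sum_congr rfl fun k _ => Finset.sum_congr rfl fun l _ => key k l]
    _ = (1/2) * ((∑ k, ∑ l, w k * w l * A k l) + t * (∑ k, ∑ l, w k * dl l * A k l)
          + t * (∑ k, ∑ l, dl k * w l * A k l) + t^2 * (∑ k, ∑ l, dl k * dl l * A k l)) := by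
        congr 1
        simp only [Finset.sum_add_distrib, Finset.mul_sum]
    _ = (1/2) * (∑ k, ∑ l, w k * w l * A k l) + t * (∑ k, ∑ l, w k * dl l * A k l)
          + (1/2) * t^2 * (∑ k, ∑ l, dl k * dl l * A k l) := by rw [swap]; ring

lemma fROCP_eq {n q : ℕ} (μ : Fin n → ℝ) (X : Matrix (Fin n) (Fin q) ℝ) :
    fROCP μ X = (1/2) * ∑ k, ∑ l, (∑ i, μ i * X i k) * (∑ i, μ i * X i l) *
      |((k : ℕ) : ℝ) - ((l : ℕ) : ℝ)| := by
  unfold fROCP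
  congr 1
  have h2 : ∀ k l : Fin q,
      (∑ i, μ i * X i k) * (∑ i, μ i * X i l) * |((k : ℕ) : ℝ) - ((l : ℕ) : ℝ)|
      = ∑ i, ∑ j, μ i * X i k * (μ j * X j l) * |((k : ℕ) : ℝ) - ((l : ℕ) : ℝ)| := by
    intro k l
    rw [Finset.sum_mul_sum, Finset.sum_mul]
    exact Finset.sum_congr rfl fun i _ => by rw [Finset.sum_mul]
  calc ∑ i, ∑ j, ∑ k, ∑ l : Fin q,
        μ i * X i k * (μ j * X j l) * |((k : ℕ) : ℝ) - ((l : ℕ) : ℝ)|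
      = ∑ i, ∑ k, ∑ j, ∑ l : Fin q,
        μ i * X i k * (μ j * X j l) * |((k : ℕ) : ℝ) - ((l : ℕ) : ℝ)| :=
        Finset.sum_congr rfl fun i _ => Finset.sum_comm
    _ = ∑ k, ∑ i, ∑ j, ∑ l : Fin q,
        μ i * X i k * (μ j * X j l) * |((k : ℕ) : ℝ) - ((l : ℕ) : ℝ)| := Finset.sum_comm
    _ = ∑ k, ∑ i, ∑ l, ∑ j,
        μ i * X i k * (μ j * X j l) * |((k : ℕ) : ℝ) - ((l : ℕ) : ℝ)| :=
        Finset.sum_congr rfl fun k _ => Finset.sum_congr rfl fun i _ => Finset.sum_comm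
    _ = ∑ k, ∑ l, ∑ i, ∑ j,
        μ i * X i k * (μ j * X j l) * |((k : ℕ) : ℝ) - ((l : ℕ) : ℝ)| :=
        Finset.sum_congr rfl fun k _ => Finset.sum_comm
    _ = ∑ k, ∑ l, (∑ i, μ i * X i k) * (∑ i, μ i * X i l) *
        |((k : ℕ) : ℝ) - ((l : ℕ) : ℝ)| :=
        Finset.sum_congr rfl fun k _ => Finset.sum_congr rfl fun l _ => (h2 k l).symm


set_option maxHeartbeats 6000000 in
theorem internal_ordering_in_optimal_symmetric_solution (n q : ℕ) (hnq : q ≤ n) (hq : 4 ≤ q)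
    (d : Fin n → ℕ) (μ : Fin n → ℝ)
    (hμ : ∀ i, 0 ≤ μ i)
    (hμ_inj : Function.Injective μ)
    (hμ_mono : ∀ i j : Fin n, 2 ≤ d i → 2 ≤ d j → i < j → μ j ≤ μ i)
    (hd_anti : ∀ i j : Fin n, i ≤ j → d j ≤ d i)
    (hd_sum : ∑ i, d i = 2 * (n - 1))
    (hd_int : ∀ i : Fin n, (i : ℕ) < q → 1 < d i)
    (hd_pend : ∀ i : Fin n, q ≤ (i : ℕ) → d i = 1)
    (X : Matrix (Fin n) (Fin q) ℝ)
    (hfeas : ROCPFeasible n q d X)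
    (hopt : ∀ Y, ROCPFeasible n q d Y → fROCP μ Y ≤ fROCP μ X)
    (hsym : SymmetricSol X)
    (i j : Fin n) (hi : (i : ℕ) < q) (hj : (j : ℕ) < q)
    (k : ℕ) (hk2 : 2 ≤ k) (hkc : k ≤ (q + 1) / 2)
    (hxi : 0 < X i ⟨k - 2, by omega⟩) (hxj : 0 < X j ⟨k - 1, by omega⟩) :
    i ≤ j := by
  by_contra hij
  have hji : j < i := lt_of_not_ge hij
  obtain ⟨hbox, hrow, hcol, hdeg0, hdeg1⟩ := hfeas
  -- basic facts
  have hdi2 : 2 ≤ d i := hd_int i hi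
  have hdj2 : 2 ≤ d j := hd_int j hj
  have hdij : d i ≤ d j := hd_anti j i hji.le
  have hμij : μ i < μ j := by
    refine lt_of_le_of_ne (hμ_mono j i hdj2 hdi2 hji) (fun h => ?_)
    exact absurd (hμ_inj h) (ne_of_gt hji)
  have hμj0 : 0 < μ j := lt_of_le_of_lt (hμ i) hμij
  -- positions
  set a : Fin q := ⟨k - 2, by omega⟩ with hadef
  set b : Fin q := ⟨k - 1, by omega⟩ with hbdef
  have hav : (a : ℕ) = k - 2 := rfl
  have hbv : (b : ℕ) = k - 1 := rfl
  have hab : a ≠ b := by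
    intro h
    have := congrArg Fin.val h
    rw [hav, hbv] at this; omega
  have hxia : 0 < X i a := hxi
  have hxjb : 0 < X j b := hxj
  -- q < n
  have hqn : q < n := by
    by_contra h
    push_neg at h
    have hn : n = q := le_antisymm h hnq
    have h2n : 2 * n ≤ ∑ x, d x := by
      calc 2 * n = ∑ _x : Fin n, 2 := by
            rw [Finset.sum_const, Finset.card_univ, Fintype.card_fin, smul_eq_mul, mul_comm]
        _ ≤ ∑ x, d x := Finset.sum_le_sum fun x _ => hd_int x (by omega)
    omega
  -- degree gap
  set s' : ℝ := (d j : ℝ) - (d i : ℝ) with hs'def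
  have hs0 : 0 ≤ s' := by
    rw [hs'def]; simp only [sub_nonneg, Nat.cast_le]; exact hdij
  -- the column b is interior
  have hb0 : (b : ℕ) ≠ 0 := by rw [hbv]; omega
  have hbq : (b : ℕ) ≠ q - 1 := by rw [hbv]; omega
  have hdegb : ∑ x, ((d x : ℝ) - 2) * X x b = 0 := hdeg0 b hb0 hbq
  -- a pendent vertex carrying mass at b (when needed)
  have hpend : ∃ p : Fin n, q ≤ (p : ℕ) ∧ (s' ≠ 0 → 0 < X p b) := by
    by_cases hs : s' = 0
    · exact ⟨⟨q, hqn⟩, le_refl q, fun h => absurd hs h⟩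
    · have e : ∀ x : Fin n, ((d x : ℝ) - 2) * X x b
          = (if (x : ℕ) < q then ((d x : ℝ) - 2) * X x b else 0)
            - (if (x : ℕ) < q then 0 else X x b) := by
        intro x
        by_cases hx : (x : ℕ) < q
        · rw [if_pos hx, if_pos hx, sub_zero]
        · rw [if_neg hx, if_neg hx, hd_pend x (le_of_not_gt hx), zero_sub]
          push_cast; ring
      have h3 : ∑ x : Fin n, ((d x : ℝ) - 2) * X x b
          = ∑ x : Fin n, ((if (x : ℕ) < q then ((d x : ℝ) - 2) * X x b else 0)
            - (if (x : ℕ) < q then 0 else X x b)) := Finset.sum_congr rfl fun x _ => e x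
      have h4 : ∑ x : Fin n, ((if (x : ℕ) < q then ((d x : ℝ) - 2) * X x b else 0)
            - (if (x : ℕ) < q then 0 else X x b))
          = (∑ x : Fin n, if (x : ℕ) < q then ((d x : ℝ) - 2) * X x b else 0)
            - ∑ x : Fin n, (if (x : ℕ) < q then 0 else X x b) := Finset.sum_sub_distrib _ _
      have hsplit : (∑ x : Fin n, if (x : ℕ) < q then ((d x : ℝ) - 2) * X x b else 0)
          = ∑ x : Fin n, (if (x : ℕ) < q then 0 else X x b) := by
        rw [h3, h4] at hdegb; linarith
      have hint_pos : 0 < ∑ x : Fin n, if (x : ℕ) < q then ((d x : ℝ) - 2) * X x b else 0 := by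
        refine Finset.sum_pos' (fun x _ => ?_) ⟨j, Finset.mem_univ j, ?_⟩
        · by_cases hx : (x : ℕ) < q
          · rw [if_pos hx]
            have h2 : (2:ℝ) ≤ (d x : ℝ) := by exact_mod_cast hd_int x hx
            exact mul_nonneg (by linarith) (hbox x b).1
          · rw [if_neg hx]
        · rw [if_pos hj]
          have hdj3 : (3:ℕ) ≤ d j := by
            rcases lt_or_eq_of_le hdij with h | h
            · omega
            · exfalso; apply hs; rw [hs'def, h]; ring
          have : (3:ℝ) ≤ (d j : ℝ) := by exact_mod_cast hdj3
          exact mul_pos (by linarith) hxjb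
      have hex : ∃ x : Fin n, 0 < (if (x : ℕ) < q then 0 else X x b) := by
        by_contra hc
        push_neg at hc
        have h1 : ∑ x : Fin n, (if (x : ℕ) < q then 0 else X x b) ≤ 0 :=
          Finset.sum_nonpos fun x _ => hc x
        rw [hsplit] at hint_pos
        linarith
      obtain ⟨p, hp⟩ := hex
      have hpq : q ≤ (p : ℕ) := by
        by_contra hc
        push_neg at hc
        rw [if_pos hc] at hp
        exact lt_irrefl 0 hp
      rw [if_neg (not_lt.2 hpq)] at hp
      exact ⟨p, hpq, fun _ => hp⟩
  obtain ⟨p, hpq, hpb⟩ := hpend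
  have hip : i ≠ p := fun h => by rw [h] at hi; omega
  have hjp : j ≠ p := fun h => by rw [h] at hj; omega
  have hijn : i ≠ j := ne_of_gt hji
  have hdp : d p = 1 := hd_pend p hpq
  -- cast facts
  have hc1 : ((k - 2 : ℕ) : ℝ) = (k : ℝ) - 2 := by
    rw [Nat.cast_sub hk2]; norm_num
  have hc2 : ((k - 1 : ℕ) : ℝ) = (k : ℝ) - 1 := by
    rw [Nat.cast_sub (by omega : 1 ≤ k)]; norm_num
  have hk2q : 2 * k ≤ q + 1 := by omega
  -- column weights
  set w : Fin q → ℝ := fun l => ∑ x : Fin n, μ x * X x l with hwdef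
  have hw0 : ∀ l, 0 ≤ w l := fun l =>
    Finset.sum_nonneg fun x _ => mul_nonneg (hμ x) (hbox x l).1
  have hwsym : ∀ l : Fin q, w (Fin.rev l) = w l := by
    intro l
    rw [hwdef]
    exact Finset.sum_congr rfl fun x _ => by rw [← hsym x l]
  have hwb : 0 < w b := by
    rw [hwdef]
    exact Finset.sum_pos' (fun x _ => mul_nonneg (hμ x) (hbox x b).1)
      ⟨j, Finset.mem_univ j, mul_pos hμj0 hxjb⟩
  -- the first-order gain
  set G : ℝ := (∑ l : Fin q, w l * |((l : ℕ) : ℝ) - ((a : ℕ) : ℝ)|)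
    - ∑ l : Fin q, w l * |((l : ℕ) : ℝ) - ((b : ℕ) : ℝ)| with hGdef
  have hGpos : 0 < G := by
    have e1 : ∀ l : Fin q, w l * |((l : ℕ) : ℝ) - ((a : ℕ) : ℝ)|
        - w l * |((l : ℕ) : ℝ) - ((b : ℕ) : ℝ)|
        = (if k - 1 ≤ (l : ℕ) then w l else 0) - (if (l : ℕ) ≤ k - 2 then w l else 0) := by
      intro l
      by_cases hl : k - 1 ≤ (l : ℕ)
      · have hcast : (k : ℝ) - 1 ≤ ((l : ℕ) : ℝ) := by
          rw [← hc2]; exact_mod_cast hl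
        have h1 : |((l : ℕ) : ℝ) - ((a : ℕ) : ℝ)| = ((l : ℕ) : ℝ) - ((k : ℝ) - 2) := by
          rw [hav, hc1]; exact abs_of_nonneg (by linarith)
        have h2 : |((l : ℕ) : ℝ) - ((b : ℕ) : ℝ)| = ((l : ℕ) : ℝ) - ((k : ℝ) - 1) := by
          rw [hbv, hc2]; exact abs_of_nonneg (by linarith)
        rw [h1, h2, if_pos hl, if_neg (by omega)]
        ring
      · have hl' : (l : ℕ) ≤ k - 2 := by omega
        have hcast : ((l : ℕ) : ℝ) ≤ (k : ℝ) - 2 := by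
          rw [← hc1]; exact_mod_cast hl'
        have h1 : |((l : ℕ) : ℝ) - ((a : ℕ) : ℝ)| = ((k : ℝ) - 2) - ((l : ℕ) : ℝ) := by
          rw [hav, hc1, abs_sub_comm]; exact abs_of_nonneg (by linarith)
        have h2 : |((l : ℕ) : ℝ) - ((b : ℕ) : ℝ)| = ((k : ℝ) - 1) - ((l : ℕ) : ℝ) := by
          rw [hbv, hc2, abs_sub_comm]; exact abs_of_nonneg (by linarith)
        rw [h1, h2, if_neg hl, if_pos hl']
        ring
    have e2 : G = ∑ l : Fin q, ((if k - 1 ≤ (l : ℕ) then w l else 0)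
        - (if (l : ℕ) ≤ k - 2 then w l else 0)) := by
      rw [hGdef, ← Finset.sum_sub_distrib]
      exact Finset.sum_congr rfl fun l _ => e1 l
    have e3 : (∑ l : Fin q, (if (l : ℕ) ≤ k - 2 then w l else 0))
        = ∑ l : Fin q, (if q + 1 - k ≤ (l : ℕ) then w l else 0) := by
      have hb1 : ∀ l : Fin q, (if ((Fin.rev l : Fin q) : ℕ) ≤ k - 2 then w (Fin.rev l) else 0)
          = (if q + 1 - k ≤ (l : ℕ) then w l else 0) := by
        intro l
        have hcond : (((Fin.rev l : Fin q) : ℕ) ≤ k - 2) ↔ (q + 1 - k ≤ (l : ℕ)) := by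
          rw [Fin.val_rev]
          have := l.isLt
          omega
        rw [hwsym l]
        exact if_congr hcond rfl rfl
      calc (∑ l : Fin q, (if (l : ℕ) ≤ k - 2 then w l else 0))
          = ∑ l : Fin q, (if ((Fin.rev l : Fin q) : ℕ) ≤ k - 2 then w (Fin.rev l) else 0) :=
            (Fintype.sum_bijective Fin.rev Fin.rev_bijective _ _ fun x => rfl).symm
        _ = ∑ l : Fin q, (if q + 1 - k ≤ (l : ℕ) then w l else 0) :=
            Finset.sum_congr rfl fun l _ => hb1 l
    have e4 : G = ∑ l : Fin q, ((if k - 1 ≤ (l : ℕ) then w l else 0)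
        - (if q + 1 - k ≤ (l : ℕ) then w l else 0)) := by
      rw [e2, Finset.sum_sub_distrib, e3, ← Finset.sum_sub_distrib]
    rw [e4]
    refine Finset.sum_pos' (fun l _ => ?_) ⟨b, Finset.mem_univ b, ?_⟩
    · by_cases h2 : q + 1 - k ≤ (l : ℕ)
      · rw [if_pos h2, if_pos (by omega : k - 1 ≤ (l : ℕ))]
        simp
      · rw [if_neg h2]
        by_cases h3 : k - 1 ≤ (l : ℕ)
        · rw [if_pos h3]; simpa using hw0 l
        · rw [if_neg h3]; simp
    · rw [hbv, if_pos (le_refl _), if_neg (by omega)]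
      simpa using hwb
  -- step sizes
  set D : ℝ := μ j - μ i + s' * μ p with hDdef
  have hD : 0 < D := by
    rw [hDdef]
    have := mul_nonneg hs0 (hμ p)
    linarith
  set E : ℝ := if s' = 0 then (1:ℝ) else X p b / s' with hEdef
  have hE : 0 < E := by
    rw [hEdef]
    by_cases hs : s' = 0
    · rw [if_pos hs]; norm_num
    · rw [if_neg hs]
      exact div_pos (hpb hs) (lt_of_le_of_ne hs0 (Ne.symm hs))
  set ε : ℝ := min (min (X i a) (X j b)) (min (G / (2 * D)) E) with hεdef
  have hε0 : 0 < ε := lt_min (lt_min hxia hxjb) (lt_min (div_pos hGpos (by linarith)) hE)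
  have hε1 : ε ≤ X i a := le_trans (min_le_left _ _) (min_le_left _ _)
  have hε2 : ε ≤ X j b := le_trans (min_le_left _ _) (min_le_right _ _)
  have hεE : ε ≤ E := by
    rw [hεdef]
    exact le_trans (min_le_right _ _) (min_le_right _ _)
  have hεG : ε ≤ G / (2 * D) := by
    rw [hεdef]
    exact le_trans (min_le_right _ _) (min_le_left _ _)
  have hε3 : ε * s' ≤ X p b := by
    by_cases hs : s' = 0
    · rw [hs, mul_zero]; exact (hbox p b).1
    · have hspos : 0 < s' := lt_of_le_of_ne hs0 (Ne.symm hs)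
      have h1 : ε ≤ X p b / s' := by rwa [hEdef, if_neg hs] at hεE
      calc ε * s' ≤ (X p b / s') * s' := mul_le_mul_of_nonneg_right h1 hs0
        _ = X p b := div_mul_cancel₀ _ (ne_of_gt hspos)
  have hε4 : ε * D < G := by
    have h2 : ε * D ≤ (G / (2 * D)) * D := mul_le_mul_of_nonneg_right hεG hD.le
    have h3 : (G / (2 * D)) * D = G / 2 := by
      field_simp
    rw [h3] at h2
    exact lt_of_le_of_lt h2 (by linarith)
  -- disequalities
  have hjine : j ≠ i := Ne.symm hijn
  have hpi : p ≠ i := Ne.symm hip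
  have hpj : p ≠ j := Ne.symm hjp
  have hba : b ≠ a := Ne.symm hab
  -- the perturbation
  set ci : Fin n → ℝ := fun x => if x = i then (-1:ℝ) else if x = j then 1
    else if x = p then s' else 0 with hcidef
  set dl : Fin q → ℝ := fun l => if l = a then (1:ℝ) else if l = b then (-1:ℝ) else 0
    with hdldef
  set Y : Matrix (Fin n) (Fin q) ℝ := fun x l => X x l + ε * ci x * dl l with hYdef
  have hYe : ∀ x l, Y x l = X x l + ε * ci x * dl l := fun x l => rfl
  have hcii : ci i = -1 := by simp [hcidef]
  have hcij : ci j = 1 := by simp [hcidef, hjine]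
  have hcip : ci p = s' := by simp [hcidef, hpi, hpj]
  have hcio : ∀ x, x ≠ i → x ≠ j → x ≠ p → ci x = 0 := fun x h1 h2 h3 => by
    simp [hcidef, h1, h2, h3]
  have hdla : dl a = 1 := by simp [hdldef]
  have hdlb : dl b = -1 := by simp [hdldef, hba]
  have hdlo : ∀ l, l ≠ a → l ≠ b → dl l = 0 := fun l h1 h2 => by simp [hdldef, h1, h2]
  have hεs : 0 ≤ ε * s' := mul_nonneg hε0.le hs0
  have hpair : ∀ r : Fin n, X r a + X r b ≤ 1 := fun r => by
    have h := pair_le_sum (X r) a b hab (fun l' => (hbox r l').1)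
    rwa [hrow r] at h
  -- feasibility of the perturbed matrix
  have hYfeas : ROCPFeasible n q d Y := by
    refine ⟨?_, ?_, ?_, ?_, ?_⟩
    · -- box constraints
      intro x l
      by_cases h1 : x = i
      · subst h1
        by_cases hla : l = a
        · subst hla
          have e : Y x a = X x a - ε := by rw [hYe, hcii, hdla]; ring
          rw [e]
          exact ⟨by linarith, by linarith [(hbox x a).2, hε0]⟩
        · by_cases hlb : l = b
          · subst hlb
            have e : Y x b = X x b + ε := by rw [hYe, hcii, hdlb]; ring
            rw [e]
            exact ⟨by linarith [(hbox x b).1, hε0], by linarith [hpair x, hε1]⟩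
          · have e : Y x l = X x l := by rw [hYe, hdlo l hla hlb]; ring
            rw [e]; exact hbox x l
      · by_cases h2 : x = j
        · subst h2
          by_cases hla : l = a
          · subst hla
            have e : Y x a = X x a + ε := by rw [hYe, hcij, hdla]; ring
            rw [e]
            exact ⟨by linarith [(hbox x a).1, hε0], by linarith [hpair x, hε2]⟩
          · by_cases hlb : l = b
            · subst hlb
              have e : Y x b = X x b - ε := by rw [hYe, hcij, hdlb]; ring
              rw [e]
              exact ⟨by linarith, by linarith [(hbox x b).2, hε0]⟩
            · have e : Y x l = X x l := by rw [hYe, hdlo l hla hlb]; ring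
              rw [e]; exact hbox x l
        · by_cases h3 : x = p
          · subst h3
            by_cases hla : l = a
            · subst hla
              have e : Y x a = X x a + ε * s' := by rw [hYe, hcip, hdla]; ring
              rw [e]
              exact ⟨by linarith [(hbox x a).1], by linarith [hpair x, hε3]⟩
            · by_cases hlb : l = b
              · subst hlb
                have e : Y x b = X x b - ε * s' := by rw [hYe, hcip, hdlb]; ring
                rw [e]
                exact ⟨by linarith, by linarith [(hbox x b).2]⟩
              · have e : Y x l = X x l := by rw [hYe, hdlo l hla hlb]; ring
                rw [e]; exact hbox x l
          · have e : Y x l = X x l := by rw [hYe, hcio x h1 h2 h3]; ring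
            rw [e]; exact hbox x l
    · -- row sums
      intro x
      have hdl0 : ∑ l : Fin q, dl l = 0 := by
        have h : ∑ l : Fin q, (if l = a then (1:ℝ) else if l = b then (-1:ℝ) else 0)
            * (fun _ : Fin q => (1:ℝ)) l = 1 * (fun _ : Fin q => (1:ℝ)) a
              + (-1) * (fun _ : Fin q => (1:ℝ)) b := sum_ite2 hab _ _ _
        simp only [mul_one] at h
        rw [hdldef, h]; norm_num
      calc ∑ l : Fin q, Y x l = ∑ l : Fin q, (X x l + (ε * ci x) * dl l) := by
            refine Finset.sum_congr rfl fun l _ => ?_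
            rw [hYe x l]
        _ = (∑ l : Fin q, X x l) + ∑ l : Fin q, (ε * ci x) * dl l := Finset.sum_add_distrib
        _ = 1 + (ε * ci x) * ∑ l : Fin q, dl l := by rw [hrow x, ← Finset.mul_sum]
        _ = 1 := by rw [hdl0, mul_zero, add_zero]
    · -- internal column sums
      intro l
      have e : ∀ x : Fin n, (if (x : ℕ) < q then Y x l else 0)
          = (if (x : ℕ) < q then X x l else 0)
            + (if x = i then (-1:ℝ) else if x = j then 1 else 0) * (ε * dl l) := by
        intro x
        by_cases h1 : x = i
        · subst h1
          rw [if_pos hi, if_pos hi, if_pos rfl, hYe, hcii]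
          ring
        · by_cases h2 : x = j
          · subst h2
            rw [if_pos hj, if_pos hj, if_neg h1, if_pos rfl, hYe, hcij]
            ring
          · by_cases h3 : x = p
            · subst h3
              rw [if_neg (not_lt.2 hpq), if_neg (not_lt.2 hpq), if_neg h1, if_neg h2]
              ring
            · rw [if_neg h1, if_neg h2]
              have e2 : Y x l = X x l := by rw [hYe, hcio x h1 h2 h3]; ring
              rw [e2]
              ring
      have h2 : ∑ x : Fin n, (if x = i then (-1:ℝ) else if x = j then 1 else 0) * (ε * dl l)
          = (-1) * (ε * dl l) + 1 * (ε * dl l) := sum_ite2 hijn _ _ _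
      calc ∑ x : Fin n, (if (x : ℕ) < q then Y x l else 0)
          = ∑ x : Fin n, ((if (x : ℕ) < q then X x l else 0)
              + (if x = i then (-1:ℝ) else if x = j then 1 else 0) * (ε * dl l)) :=
            Finset.sum_congr rfl fun x _ => e x
        _ = (∑ x : Fin n, if (x : ℕ) < q then X x l else 0)
              + ∑ x : Fin n, (if x = i then (-1:ℝ) else if x = j then 1 else 0) * (ε * dl l) :=
            Finset.sum_add_distrib
        _ = 1 := by rw [hcol l, h2]; ring
    · -- interior degree constraints
      intro l h1 h2
      have hdegY : ∑ x : Fin n, ((d x : ℝ) - 2) * Y x l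
          = ∑ x : Fin n, ((d x : ℝ) - 2) * X x l := by
        have e : ∀ x : Fin n, ((d x : ℝ) - 2) * Y x l
            = ((d x : ℝ) - 2) * X x l + ci x * (((d x : ℝ) - 2) * (ε * dl l)) := by
          intro x; rw [hYe]; ring
        rw [Finset.sum_congr rfl fun x _ => e x, Finset.sum_add_distrib]
        have h3 : ∑ x : Fin n, ci x * (((d x : ℝ) - 2) * (ε * dl l))
            = (-1) * (((d i : ℝ) - 2) * (ε * dl l)) + 1 * (((d j : ℝ) - 2) * (ε * dl l))
              + s' * (((d p : ℝ) - 2) * (ε * dl l)) := by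
          simp only [hcidef]
          exact sum_ite3 hijn hip hjp _ _ _ _
        rw [h3, hdp, hs'def]
        push_cast
        ring
      rw [hdegY]
      exact hdeg0 l h1 h2
    · -- boundary degree constraints
      intro l hl
      have hdegY : ∑ x : Fin n, ((d x : ℝ) - 2) * Y x l
          = ∑ x : Fin n, ((d x : ℝ) - 2) * X x l := by
        have e : ∀ x : Fin n, ((d x : ℝ) - 2) * Y x l
            = ((d x : ℝ) - 2) * X x l + ci x * (((d x : ℝ) - 2) * (ε * dl l)) := by
          intro x; rw [hYe]; ring
        rw [Finset.sum_congr rfl fun x _ => e x, Finset.sum_add_distrib]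
        have h3 : ∑ x : Fin n, ci x * (((d x : ℝ) - 2) * (ε * dl l))
            = (-1) * (((d i : ℝ) - 2) * (ε * dl l)) + 1 * (((d j : ℝ) - 2) * (ε * dl l))
              + s' * (((d p : ℝ) - 2) * (ε * dl l)) := by
          simp only [hcidef]
          exact sum_ite3 hijn hip hjp _ _ _ _
        rw [h3, hdp, hs'def]
        push_cast
        ring
      rw [hdegY]
      exact hdeg1 l hl
  -- objective value of the perturbation
  set t : ℝ := ε * D with htdef
  have ht0 : 0 < t := mul_pos hε0 hD
  have htG : t < G := by rw [htdef]; exact hε4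
  have hWY : ∀ l : Fin q, ∑ x : Fin n, μ x * Y x l = w l + t * dl l := by
    intro l
    have e : ∀ x : Fin n, μ x * Y x l = μ x * X x l + ci x * (μ x * (ε * dl l)) := by
      intro x; rw [hYe]; ring
    rw [Finset.sum_congr rfl fun x _ => e x, Finset.sum_add_distrib]
    have h2 : ∑ x : Fin n, ci x * (μ x * (ε * dl l))
        = (-1) * (μ i * (ε * dl l)) + 1 * (μ j * (ε * dl l)) + s' * (μ p * (ε * dl l)) := by
      simp only [hcidef]
      exact sum_ite3 hijn hip hjp _ _ _ _
    rw [h2]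
    simp only [hwdef, htdef, hDdef]
    ring
  have hfY2 : fROCP μ Y = (1/2) * (∑ k' : Fin q, ∑ l : Fin q,
        w k' * w l * |((k' : ℕ) : ℝ) - ((l : ℕ) : ℝ)|)
      + t * (∑ k' : Fin q, ∑ l : Fin q, w k' * dl l * |((k' : ℕ) : ℝ) - ((l : ℕ) : ℝ)|)
      + (1/2) * t^2 * (∑ k' : Fin q, ∑ l : Fin q,
        dl k' * dl l * |((k' : ℕ) : ℝ) - ((l : ℕ) : ℝ)|) := by
    have h0 : fROCP μ Y = (1/2) * ∑ k' : Fin q, ∑ l : Fin q,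
        (w k' + t * dl k') * (w l + t * dl l) * |((k' : ℕ) : ℝ) - ((l : ℕ) : ℝ)| := by
      rw [fROCP_eq]
      congr 1
      refine Finset.sum_congr rfl fun k' _ => Finset.sum_congr rfl fun l _ => ?_
      rw [hWY k', hWY l]
    rw [h0]
    exact quad_expand w dl t (fun k' l => |((k' : ℕ) : ℝ) - ((l : ℕ) : ℝ)|)
      (fun k' l => abs_sub_comm _ _)
  have hfX2 : fROCP μ X = (1/2) * ∑ k' : Fin q, ∑ l : Fin q,
      w k' * w l * |((k' : ℕ) : ℝ) - ((l : ℕ) : ℝ)| := by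
    rw [fROCP_eq]
  have hC1 : (∑ k' : Fin q, ∑ l : Fin q,
      w k' * dl l * |((k' : ℕ) : ℝ) - ((l : ℕ) : ℝ)|) = G := by
    have inner : ∀ k' : Fin q, ∑ l : Fin q, w k' * dl l * |((k' : ℕ) : ℝ) - ((l : ℕ) : ℝ)|
        = w k' * |((k' : ℕ) : ℝ) - ((a : ℕ) : ℝ)|
          - w k' * |((k' : ℕ) : ℝ) - ((b : ℕ) : ℝ)| := by
      intro k'
      have e : ∀ l : Fin q, w k' * dl l * |((k' : ℕ) : ℝ) - ((l : ℕ) : ℝ)|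
          = dl l * (w k' * |((k' : ℕ) : ℝ) - ((l : ℕ) : ℝ)|) := fun l => by ring
      rw [Finset.sum_congr rfl fun l _ => e l]
      have h' : ∑ l : Fin q, (if l = a then (1:ℝ) else if l = b then (-1:ℝ) else 0)
          * (w k' * |((k' : ℕ) : ℝ) - ((l : ℕ) : ℝ)|)
          = 1 * (w k' * |((k' : ℕ) : ℝ) - ((a : ℕ) : ℝ)|)
            + (-1) * (w k' * |((k' : ℕ) : ℝ) - ((b : ℕ) : ℝ)|) := sum_ite2 hab _ _ _
      simp only [hdldef]
      rw [h']
      ring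
    rw [Finset.sum_congr rfl fun k' _ => inner k', Finset.sum_sub_distrib, hGdef]
  have haa : |((a : ℕ) : ℝ) - ((a : ℕ) : ℝ)| = 0 := by rw [sub_self, abs_zero]
  have hbb : |((b : ℕ) : ℝ) - ((b : ℕ) : ℝ)| = 0 := by rw [sub_self, abs_zero]
  have habm : |((a : ℕ) : ℝ) - ((b : ℕ) : ℝ)| = 1 := by
    rw [hav, hbv, hc1, hc2]
    have e : ((k:ℝ) - 2) - ((k:ℝ) - 1) = -1 := by ring
    rw [e]
    norm_num
  have hbam : |((b : ℕ) : ℝ) - ((a : ℕ) : ℝ)| = 1 := by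
    rw [hbv, hav, hc1, hc2]
    have e : ((k:ℝ) - 1) - ((k:ℝ) - 2) = 1 := by ring
    rw [e]
    norm_num
  have hC2 : (∑ k' : Fin q, ∑ l : Fin q,
      dl k' * dl l * |((k' : ℕ) : ℝ) - ((l : ℕ) : ℝ)|) = -2 := by
    have inner : ∀ k' : Fin q, ∑ l : Fin q, dl k' * dl l * |((k' : ℕ) : ℝ) - ((l : ℕ) : ℝ)|
        = dl k' * (|((k' : ℕ) : ℝ) - ((a : ℕ) : ℝ)| - |((k' : ℕ) : ℝ) - ((b : ℕ) : ℝ)|) := by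
      intro k'
      have e : ∀ l : Fin q, dl k' * dl l * |((k' : ℕ) : ℝ) - ((l : ℕ) : ℝ)|
          = dl l * (dl k' * |((k' : ℕ) : ℝ) - ((l : ℕ) : ℝ)|) := fun l => by ring
      rw [Finset.sum_congr rfl fun l _ => e l]
      have h' : ∑ l : Fin q, (if l = a then (1:ℝ) else if l = b then (-1:ℝ) else 0)
          * (dl k' * |((k' : ℕ) : ℝ) - ((l : ℕ) : ℝ)|)
          = 1 * (dl k' * |((k' : ℕ) : ℝ) - ((a : ℕ) : ℝ)|)
            + (-1) * (dl k' * |((k' : ℕ) : ℝ) - ((b : ℕ) : ℝ)|) := sum_ite2 hab _ _ _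
      conv_lhs => rw [hdldef]
      rw [h']
      ring
    rw [Finset.sum_congr rfl fun k' _ => inner k']
    have h2 : ∑ k' : Fin q, (if k' = a then (1:ℝ) else if k' = b then (-1:ℝ) else 0)
        * (|((k' : ℕ) : ℝ) - ((a : ℕ) : ℝ)| - |((k' : ℕ) : ℝ) - ((b : ℕ) : ℝ)|)
        = 1 * (|((a : ℕ) : ℝ) - ((a : ℕ) : ℝ)| - |((a : ℕ) : ℝ) - ((b : ℕ) : ℝ)|)
          + (-1) * (|((b : ℕ) : ℝ) - ((a : ℕ) : ℝ)| - |((b : ℕ) : ℝ) - ((b : ℕ) : ℝ)|) :=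
      sum_ite2 hab _ _ _
    conv_lhs => rw [hdldef]
    rw [h2, haa, hbb, habm, hbam]
    norm_num
  -- contradiction with optimality
  have key : fROCP μ Y = fROCP μ X + (t * G - t ^ 2) := by
    rw [hfY2, hfX2, hC1, hC2]; ring
  have hle := hopt Y hYfeas
  rw [key] at hle
  have hprod : 0 < t * (G - t) := mul_pos ht0 (by linarith only [htG])
  have hexp2 : t * (G - t) = t * G - t^2 := by ring
  have h9 : 0 < t * G - t ^ 2 := by linarith only [hprod, hexp2]
  have h10 : t * G - t ^ 2 ≤ 0 := by linarith only [hle]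
  linarith only [h9, h10]
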